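/- For every T > 0 and every τ ∈ [0, T], one has ξ_T(τ) ≥ (g₁g₂/(a₂a₃)) · 1/(e^{a₁T} − 1). (This is the ultimate lower bound of Lemma 1 specialized to the 1-cycle with unit dose and period T, whose output at phase τ equals ξ_T(τ).) -/

import Mathlib

open Matrix
open scoped Nat

/-- The system matrix of the third-order PK model. -/
noncomputable def Amat (a₁ a₂ a₃ g₁ g₂ : ℝ) : Matrix (Fin 3) (Fin 3) ℝ :=
  !![-a₁, 0, 0; g₁, -a₂, 0; 0, g₂, -a₃]

/-- The input vector `B = (1,0,0)ᵀ`. -/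
noncomputable def Bvec : Fin 3 → ℝ := ![1, 0, 0]

/-- The output map `C x = x₃`. -/
noncomputable def Cout (x : Fin 3 → ℝ) : ℝ := x 2

/-- `ξ_T(τ) = C e^{τA} (I − e^{TA})⁻¹ B`, the output at phase `τ` of the 1-cycle
with unit dose and inter-dose interval `T`. -/
noncomputable def xi (a₁ a₂ a₃ g₁ g₂ : ℝ) (T τ : ℝ) : ℝ :=
  Cout ((NormedSpace.exp (τ • Amat a₁ a₂ a₃ g₁ g₂) *
    (1 - NormedSpace.exp (T • Amat a₁ a₂ a₃ g₁ g₂))⁻¹).mulVec Bvec)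

/-- A periodic-boundary comparison lemma for scalar linear ODE inequalities:
if `f' = g`, `g + a f ≥ a c` on `[0,T]` and `f T = f 0`, then `f ≥ c` on `[0,T]`. -/
lemma key1d {f g : ℝ → ℝ} {a c T : ℝ} (ha : 0 < a) (hT : 0 < T)
    (hf : ∀ s, HasDerivAt f (g s) s)
    (hge : ∀ s ∈ Set.Icc (0:ℝ) T, a * c ≤ g s + a * f s)
    (hper : f T = f 0) : ∀ τ ∈ Set.Icc (0:ℝ) T, c ≤ f τ := by
  set u : ℝ → ℝ := fun s => Real.exp (a * s) * (f s - c) with hu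
  have hu' : ∀ s, HasDerivAt u (Real.exp (a * s) * (g s + a * f s - a * c)) s := by
    intro s
    have h1 : HasDerivAt (fun s : ℝ => Real.exp (a * s)) (a * Real.exp (a * s)) s := by
      convert ((hasDerivAt_id s).const_mul a).exp using 1 <;> simp [mul_comm]
    have h2 := h1.mul ((hf s).sub_const c)
    exact h2.congr_deriv (by ring)
  have humono : MonotoneOn u (Set.Icc 0 T) := by
    apply monotoneOn_of_deriv_nonneg (convex_Icc 0 T)
    · have hud : Differentiable ℝ u := fun s => (hu' s).differentiableAt
      exact hud.continuous.continuousOn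
    · exact fun s _ => ((hu' s).differentiableAt).differentiableWithinAt
    · intro s hs
      rw [(hu' s).deriv]
      have hs' : s ∈ Set.Icc (0:ℝ) T := interior_subset hs
      have := hge s hs'
      have hexp := (Real.exp_pos (a * s)).le
      nlinarith
  have h0mem : (0:ℝ) ∈ Set.Icc (0:ℝ) T := Set.left_mem_Icc.2 hT.le
  have hTmem : (T:ℝ) ∈ Set.Icc (0:ℝ) T := Set.right_mem_Icc.2 hT.le
  have hu0 : u 0 = f 0 - c := by simp [hu]
  have huT : u T = Real.exp (a * T) * (f 0 - c) := by simp [hu, hper]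
  have h0T : u 0 ≤ u T := humono h0mem hTmem hT.le
  have hexpT : (1:ℝ) < Real.exp (a * T) := by
    have : Real.exp 0 < Real.exp (a * T) := Real.exp_lt_exp.2 (by positivity)
    simpa using this
  have hd : 0 ≤ f 0 - c := by
    rw [hu0, huT] at h0T
    nlinarith
  intro τ hτ
  have h0τ : u 0 ≤ u τ := humono h0mem hτ hτ.1
  rw [hu0] at h0τ
  have : 0 ≤ Real.exp (a * τ) * (f τ - c) := le_trans hd h0τ
  nlinarith [Real.exp_pos (a * τ)]

/-- Structure of powers of a lower-triangular `3×3` matrix. -/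
lemma pow_struct (M : Matrix (Fin 3) (Fin 3) ℝ)
    (h01 : M 0 1 = 0) (h02 : M 0 2 = 0) (h12 : M 1 2 = 0) (n : ℕ) :
    (M ^ n) 0 1 = 0 ∧ (M ^ n) 0 2 = 0 ∧ (M ^ n) 1 2 = 0 ∧
    (M ^ n) 0 0 = (M 0 0) ^ n ∧ (M ^ n) 1 1 = (M 1 1) ^ n ∧ (M ^ n) 2 2 = (M 2 2) ^ n := by
  induction n with
  | zero => simp [Matrix.one_apply]
  | succ n ih =>
    obtain ⟨i01, i02, i12, i00, i11, i22⟩ := ih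
    refine ⟨?_, ?_, ?_, ?_, ?_, ?_⟩ <;>
      simp [pow_succ, Matrix.mul_apply, Fin.sum_univ_three, i01, i02, i12, i00, i11, i22,
        h01, h02, h12]

section MatrixNorm

attribute [local instance] Matrix.linftyOpSemiNormedRing Matrix.linftyOpNormedRing
  Matrix.linftyOpNormedAlgebra

/-- Evaluation of a matrix entry, as a continuous linear map. -/
noncomputable def entryCLM (i j : Fin 3) : Matrix (Fin 3) (Fin 3) ℝ →L[ℝ] ℝ :=
  LinearMap.toContinuousLinearMap
    { toFun := fun M : Matrix (Fin 3) (Fin 3) ℝ => M i j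
      map_add' := fun _ _ => rfl
      map_smul' := fun _ _ => rfl }

lemma entryCLM_apply (i j : Fin 3) (M : Matrix (Fin 3) (Fin 3) ℝ) :
    entryCLM i j M = M i j := rfl

lemma exp_entry (M : Matrix (Fin 3) (Fin 3) ℝ) (i j : Fin 3) :
    NormedSpace.exp M i j = ∑' n : ℕ, (n !⁻¹ : ℝ) * (M ^ n) i j := by
  have hs : Summable (fun n : ℕ => (n !⁻¹ : ℝ) • M ^ n) := NormedSpace.expSeries_summable' M
  calc NormedSpace.exp M i j = entryCLM i j (∑' n : ℕ, (n !⁻¹ : ℝ) • M ^ n) := by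
        rw [NormedSpace.exp_eq_tsum ℝ]
        rfl
    _ = ∑' n : ℕ, entryCLM i j ((n !⁻¹ : ℝ) • M ^ n) := (entryCLM i j).map_tsum hs
    _ = ∑' n : ℕ, (n !⁻¹ : ℝ) * (M ^ n) i j := by
        simp [entryCLM_apply, Matrix.smul_apply, smul_eq_mul]

lemma tsum_exp_scalar (d : ℝ) : (∑' n : ℕ, (n !⁻¹ : ℝ) * d ^ n) = Real.exp d := by
  rw [Real.exp_eq_exp_ℝ, NormedSpace.exp_eq_tsum ℝ]
  simp [smul_eq_mul]

/-- Structure of the exponential of a lower-triangular `3×3` matrix. -/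
lemma exp_struct (M : Matrix (Fin 3) (Fin 3) ℝ)
    (h01 : M 0 1 = 0) (h02 : M 0 2 = 0) (h12 : M 1 2 = 0) :
    NormedSpace.exp M 0 1 = 0 ∧ NormedSpace.exp M 0 2 = 0 ∧
    NormedSpace.exp M 1 2 = 0 ∧
    NormedSpace.exp M 0 0 = Real.exp (M 0 0) ∧
    NormedSpace.exp M 1 1 = Real.exp (M 1 1) ∧
    NormedSpace.exp M 2 2 = Real.exp (M 2 2) := by
  have hp := pow_struct M h01 h02 h12
  refine ⟨?_, ?_, ?_, ?_, ?_, ?_⟩ <;> rw [exp_entry]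
  · simp [fun n => (hp n).1]
  · simp [fun n => (hp n).2.1]
  · simp [fun n => (hp n).2.2.1]
  · simp_rw [fun n => (hp n).2.2.2.1]; exact tsum_exp_scalar _
  · simp_rw [fun n => (hp n).2.2.2.2.1]; exact tsum_exp_scalar _
  · simp_rw [fun n => (hp n).2.2.2.2.2]; exact tsum_exp_scalar _

/-- `M ↦ (M *ᵥ v) i`, as a continuous linear map. -/
noncomputable def mvCLM (v : Fin 3 → ℝ) (i : Fin 3) : Matrix (Fin 3) (Fin 3) ℝ →L[ℝ] ℝ :=
  LinearMap.toContinuousLinearMap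
    { toFun := fun M : Matrix (Fin 3) (Fin 3) ℝ => M.mulVec v i
      map_add' := fun M N => by simp [Matrix.add_mulVec]
      map_smul' := fun c M => by simp [Matrix.smul_mulVec] }

lemma mvCLM_apply (v : Fin 3 → ℝ) (i : Fin 3) (M : Matrix (Fin 3) (Fin 3) ℝ) :
    mvCLM v i M = M.mulVec v i := rfl

lemma hasDerivAt_xf (A : Matrix (Fin 3) (Fin 3) ℝ) (v : Fin 3 → ℝ) (i : Fin 3) (s : ℝ) :
    HasDerivAt (fun t : ℝ => ((NormedSpace.exp (t • A)).mulVec v) i)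
      ((A.mulVec ((NormedSpace.exp (s • A)).mulVec v)) i) s := by
  have h := hasDerivAt_exp_smul_const' A s
  have h2 := ((mvCLM v i).hasFDerivAt).comp_hasDerivAt s h
  have h3 : mvCLM v i (A * NormedSpace.exp (s • A))
      = (A.mulVec ((NormedSpace.exp (s • A)).mulVec v)) i := by
    rw [mvCLM_apply, Matrix.mulVec_mulVec]
  exact h2.congr_deriv h3

/-- Lower bound for the unit-dose 1-cycle output:
`ξ_T(τ) ≥ (g₁g₂/(a₂a₃)) · 1/(e^{a₁T} − 1)` for all `τ ∈ [0, T]`. -/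
theorem xi_lower_bound
    (a₁ a₂ a₃ g₁ g₂ : ℝ)
    (ha₁ : 0 < a₁) (ha₂ : 0 < a₂) (ha₃ : 0 < a₃) (hg₁ : 0 < g₁) (hg₂ : 0 < g₂)
    (T : ℝ) (hT : 0 < T) (τ : ℝ) (hτ : τ ∈ Set.Icc (0 : ℝ) T) :
    g₁ * g₂ / (a₂ * a₃) * (1 / (Real.exp (a₁ * T) - 1)) ≤ xi a₁ a₂ a₃ g₁ g₂ T τ := by
  set A : Matrix (Fin 3) (Fin 3) ℝ := Amat a₁ a₂ a₃ g₁ g₂ with hA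
  -- entries of s • A
  have hsA01 : ∀ s : ℝ, (s • A) 0 1 = 0 := by intro s; simp [hA, Amat]
  have hsA02 : ∀ s : ℝ, (s • A) 0 2 = 0 := by intro s; simp [hA, Amat]
  have hsA12 : ∀ s : ℝ, (s • A) 1 2 = 0 := by intro s; simp [hA, Amat]
  have hsA00 : ∀ s : ℝ, (s • A) 0 0 = s * -a₁ := by intro s; simp [hA, Amat]
  have hsA11 : ∀ s : ℝ, (s • A) 1 1 = s * -a₂ := by intro s; simp [hA, Amat]
  have hsA22 : ∀ s : ℝ, (s • A) 2 2 = s * -a₃ := by intro s; simp [hA, Amat]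
  have hE := fun s : ℝ => exp_struct (s • A) (hsA01 s) (hsA02 s) (hsA12 s)
  set M : Matrix (Fin 3) (Fin 3) ℝ := NormedSpace.exp (T • A) with hM
  obtain ⟨hM01, hM02, hM12, hM00, hM11, hM22⟩ := hE T
  rw [← hM] at hM01 hM02 hM12 hM00 hM11 hM22
  rw [hsA00 T] at hM00
  rw [hsA11 T] at hM11
  rw [hsA22 T] at hM22
  have hd1 : Real.exp (T * -a₁) < 1 := by
    have : Real.exp (T * -a₁) < Real.exp 0 := Real.exp_lt_exp.2 (by nlinarith)
    simpa using this
  have hd2 : Real.exp (T * -a₂) < 1 := by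
    have : Real.exp (T * -a₂) < Real.exp 0 := Real.exp_lt_exp.2 (by nlinarith)
    simpa using this
  have hd3 : Real.exp (T * -a₃) < 1 := by
    have : Real.exp (T * -a₃) < Real.exp 0 := Real.exp_lt_exp.2 (by nlinarith)
    simpa using this
  have hdet : (1 - M).det = (1 - Real.exp (T * -a₁)) * (1 - Real.exp (T * -a₂)) *
      (1 - Real.exp (T * -a₃)) := by
    rw [Matrix.det_fin_three]
    simp [Matrix.sub_apply, Matrix.one_apply, hM01, hM02, hM12, hM00, hM11, hM22]
  have hunit : IsUnit (1 - M).det := by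
    rw [hdet]
    have p1 : (0:ℝ) < 1 - Real.exp (T * -a₁) := by linarith
    have p2 : (0:ℝ) < 1 - Real.exp (T * -a₂) := by linarith
    have p3 : (0:ℝ) < 1 - Real.exp (T * -a₃) := by linarith
    exact (mul_pos (mul_pos p1 p2) p3).ne'.isUnit
  set v : Fin 3 → ℝ := (1 - M)⁻¹.mulVec Bvec with hv
  have hveq : (1 - M).mulVec v = Bvec := by
    rw [hv, Matrix.mulVec_mulVec, Matrix.mul_nonsing_inv _ hunit, Matrix.one_mulVec]
  have hv0 : (1 - Real.exp (T * -a₁)) * v 0 = 1 := by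
    have := congrFun hveq 0
    simpa [Matrix.mulVec, dotProduct, Fin.sum_univ_three, Matrix.sub_apply,
      Matrix.one_apply, hM01, hM02, hM00, Bvec] using this
  have hMv : M.mulVec v = v - Bvec := by
    have h := hveq
    rw [Matrix.sub_mulVec, Matrix.one_mulVec] at h
    have := sub_eq_iff_eq_add.mp h
    ext i
    have := congrFun this i
    simp only [Pi.add_apply, Pi.sub_apply] at *
    linarith
  set xf : ℝ → Fin 3 → ℝ := fun s => (NormedSpace.exp (s • A)).mulVec v with hxf
  have hxi : xi a₁ a₂ a₃ g₁ g₂ T τ = xf τ 2 := by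
    show Cout ((NormedSpace.exp (τ • Amat a₁ a₂ a₃ g₁ g₂) *
      (1 - NormedSpace.exp (T • Amat a₁ a₂ a₃ g₁ g₂))⁻¹).mulVec Bvec) = _
    rw [hxf]
    show ((NormedSpace.exp (τ • A) * (1 - M)⁻¹).mulVec Bvec) 2 = _
    rw [← Matrix.mulVec_mulVec]
  have hxf0 : xf 0 = v := by
    simp [hxf, NormedSpace.exp_zero]
  have hxfT : xf T = v - Bvec := hMv
  have hx0form : ∀ s : ℝ, xf s 0 = Real.exp (s * -a₁) * v 0 := by
    intro s
    obtain ⟨e01, e02, _, e00, _, _⟩ := hE s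
    rw [hsA00] at e00
    simp [hxf, Matrix.mulVec, dotProduct, Fin.sum_univ_three, e01, e02, e00]
  have hDeriv : ∀ (i : Fin 3) (s : ℝ),
      HasDerivAt (fun t : ℝ => xf t i) ((A.mulVec (xf s)) i) s := by
    intro i s
    exact hasDerivAt_xf A v i s
  have hAmv1 : ∀ w : Fin 3 → ℝ, (A.mulVec w) 1 = g₁ * w 0 - a₂ * w 1 := by
    intro w
    simp [hA, Amat, Matrix.mulVec, dotProduct, Fin.sum_univ_three]
    ring
  have hAmv2 : ∀ w : Fin 3 → ℝ, (A.mulVec w) 2 = g₂ * w 1 - a₃ * w 2 := by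
    intro w
    simp [hA, Amat, Matrix.mulVec, dotProduct, Fin.sum_univ_three]
    ring
  set m : ℝ := Real.exp (T * -a₁) * v 0 with hm
  have hv0pos : 0 < v 0 := by
    nlinarith [Real.exp_pos (T * -a₁)]
  have hmpos : 0 < m := by
    have := Real.exp_pos (T * -a₁)
    nlinarith
  have hx0ge : ∀ s ∈ Set.Icc (0:ℝ) T, m ≤ xf s 0 := by
    intro s hs
    rw [hx0form s, hm]
    have : Real.exp (T * -a₁) ≤ Real.exp (s * -a₁) :=
      Real.exp_le_exp.2 (by nlinarith [hs.1, hs.2])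
    nlinarith
  clear_value A M v xf m
  -- Step 1 : lower bound on the second component
  have h1 : ∀ σ ∈ Set.Icc (0:ℝ) T, g₁ * m / a₂ ≤ xf σ 1 := by
    apply key1d ha₂ hT (f := fun s => xf s 1) (g := fun s => (A.mulVec (xf s)) 1)
    · exact fun s => hDeriv 1 s
    · intro s hs
      rw [hAmv1]
      have := hx0ge s hs
      have h : a₂ * (g₁ * m / a₂) = g₁ * m := by field_simp
      rw [h]
      have h2' : g₁ * m ≤ g₁ * xf s 0 := mul_le_mul_of_nonneg_left this hg₁.le
      linarith
    · rw [hxfT, hxf0]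
      simp [Bvec]
  -- Step 2 : lower bound on the third component
  have h2 : ∀ σ ∈ Set.Icc (0:ℝ) T, g₂ * (g₁ * m / a₂) / a₃ ≤ xf σ 2 := by
    apply key1d ha₃ hT (f := fun s => xf s 2) (g := fun s => (A.mulVec (xf s)) 2)
    · exact fun s => hDeriv 2 s
    · intro s hs
      rw [hAmv2]
      have := h1 s hs
      have h : a₃ * (g₂ * (g₁ * m / a₂) / a₃) = g₂ * (g₁ * m / a₂) := by
        field_simp
      rw [h]
      have h2' : g₂ * (g₁ * m / a₂) ≤ g₂ * xf s 1 := mul_le_mul_of_nonneg_left this hg₂.le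
      linarith
    · rw [hxfT, hxf0]
      simp [Bvec]
  -- Put everything together
  rw [hxi]
  have hfinal := h2 τ hτ
  -- rewrite m in terms of `Real.exp (a₁ * T)`
  have hmval : m = 1 / (Real.exp (a₁ * T) - 1) := by
    have hgt1 : (1:ℝ) < Real.exp (a₁ * T) := by
      have h0 : Real.exp 0 < Real.exp (a₁ * T) := Real.exp_lt_exp.2 (by positivity)
      simpa using h0
    have hzero : T * -a₁ + a₁ * T = 0 := by ring
    have hmul : Real.exp (T * -a₁) * Real.exp (a₁ * T) = 1 := by
      rw [← Real.exp_add, hzero, Real.exp_zero]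
    have h1 : Real.exp (T * -a₁) * v 0 * Real.exp (a₁ * T) = v 0 := by
      calc Real.exp (T * -a₁) * v 0 * Real.exp (a₁ * T)
          = Real.exp (T * -a₁) * Real.exp (a₁ * T) * v 0 := by ring
        _ = v 0 := by rw [hmul]; ring
    have key : m * (Real.exp (a₁ * T) - 1) = 1 := by
      calc m * (Real.exp (a₁ * T) - 1)
          = Real.exp (T * -a₁) * v 0 * Real.exp (a₁ * T) - Real.exp (T * -a₁) * v 0 := by
            rw [hm]; ring
        _ = v 0 - Real.exp (T * -a₁) * v 0 := by rw [h1]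
        _ = (1 - Real.exp (T * -a₁)) * v 0 := by ring
        _ = 1 := hv0
    have hne : Real.exp (a₁ * T) - 1 ≠ 0 := by linarith
    rw [eq_div_iff hne]
    exact key
  rw [hmval] at hfinal
  calc g₁ * g₂ / (a₂ * a₃) * (1 / (Real.exp (a₁ * T) - 1))
      = g₂ * (g₁ * (1 / (Real.exp (a₁ * T) - 1)) / a₂) / a₃ := by ring
    _ ≤ xf τ 2 := hfinal

end MatrixNorm
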